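/- Let α ∈ ℝ be irrational and suppose α has large odd/odd gaps, i.e., for every C > 0 there exists n such that the n-th convergent p_n/q_n has both p_n and q_n odd and the partial quotient a_{n+1} ≥ C. Then the function m̃_α(η) := sup_{t ∈ [−η, η]} |2 + e^{iπt} + e^{iπαt}|^{−1} does not have positive increase. -/

import Mathlib

/-- Complete quotients of the continued fraction expansion of `α`. -/
noncomputable def cfCQ (α : ℝ) : ℕ → ℝ
  | 0 => α
  | n + 1 => 1 / (cfCQ α n - ⌊cfCQ α n⌋)

/-- Partial quotients `a n` of the continued fraction expansion of `α`. -/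
noncomputable def cfA (α : ℝ) (n : ℕ) : ℤ := ⌊cfCQ α n⌋

/-- Numerators `p n` of the convergents of the continued fraction expansion of `α`. -/
noncomputable def cfP (α : ℝ) : ℕ → ℤ
  | 0 => cfA α 0
  | 1 => cfA α 0 * cfA α 1 + 1
  | n + 2 => cfA α (n + 2) * cfP α (n + 1) + cfP α n

/-- Denominators `q n` of the convergents of the continued fraction expansion of `α`. -/
noncomputable def cfQ (α : ℝ) : ℕ → ℤ
  | 0 => 1
  | 1 => cfA α 1
  | n + 2 => cfA α (n + 2) * cfQ α (n + 1) + cfQ α n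

/-- The function `m̃_α(η) = sup_{t ∈ [-η, η]} |2 + e^{iπt} + e^{iπαt}|⁻¹`. -/
noncomputable def mTilde (α η : ℝ) : ℝ :=
  ⨆ t : Set.Icc (-η) η,
    (‖2 + Complex.exp (Real.pi * ((t : ℝ) : ℂ) * Complex.I)
      + Complex.exp (Real.pi * (α : ℂ) * ((t : ℝ) : ℂ) * Complex.I)‖)⁻¹

noncomputable def cfQn (α : ℝ) : ℕ → ℤ
  | 0 => 0
  | 1 => 1
  | n + 2 => cfA α (n + 1) * cfQn α (n + 1) + cfQn α n

noncomputable def cfPn (α : ℝ) : ℕ → ℤ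
  | 0 => 1
  | 1 => cfA α 0
  | n + 2 => cfA α (n + 1) * cfPn α (n + 1) + cfPn α n

noncomputable def cfTheta (α : ℝ) (n : ℕ) : ℝ := α * cfQn α n - cfPn α n

section CF
variable {α : ℝ}

lemma irr_cfCQ (hα : Irrational α) : ∀ n, Irrational (cfCQ α n) := by
  intro n
  induction n with
  | zero => exact hα
  | succ n ih =>
    have h2 : Irrational (cfCQ α n - ⌊cfCQ α n⌋) := ih.sub_intCast _
    have : cfCQ α (n + 1) = (cfCQ α n - ⌊cfCQ α n⌋)⁻¹ := by rw [cfCQ, one_div]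
    rw [this]
    exact h2.inv

lemma fract_pos (hα : Irrational α) (n : ℕ) : 0 < cfCQ α n - ⌊cfCQ α n⌋ := by
  have h1 := Int.floor_le (cfCQ α n)
  have h2 : ((⌊cfCQ α n⌋ : ℤ) : ℝ) ≠ cfCQ α n := ((irr_cfCQ hα n).ne_int _).symm
  have := lt_of_le_of_ne h1 h2
  linarith

lemma fract_lt_one (n : ℕ) : cfCQ α n - ⌊cfCQ α n⌋ < 1 := by
  have := Int.fract_lt_one (cfCQ α n); rwa [Int.fract] at this

lemma one_lt_cfCQ (hα : Irrational α) (n : ℕ) : 1 < cfCQ α (n + 1) := by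
  rw [cfCQ, one_lt_div (fract_pos hα n)]
  exact fract_lt_one n

lemma cfA_lt_cfCQ (hα : Irrational α) (n : ℕ) : (cfA α n : ℝ) < cfCQ α n := by
  have := fract_pos hα n
  unfold cfA; linarith

lemma one_le_cfA (hα : Irrational α) (n : ℕ) : 1 ≤ cfA α (n + 1) := by
  have := one_lt_cfCQ hα n
  exact Int.le_floor.2 (by exact_mod_cast this.le)

lemma cfQn_nonneg (hα : Irrational α) : ∀ n, 0 ≤ cfQn α n := by
  intro n
  induction n using Nat.twoStepInduction with
  | zero => exact le_refl _
  | one => exact zero_le_one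
  | more n h1 h2 =>
    have h3 := one_le_cfA hα n
    rw [cfQn]; nlinarith

lemma one_le_cfQn (hα : Irrational α) : ∀ n, 1 ≤ cfQn α (n + 1) := by
  intro n
  induction n with
  | zero => exact le_refl _
  | succ n ih =>
    have h1 := cfQn_nonneg hα n
    have h3 := one_le_cfA hα n
    rw [cfQn]; nlinarith

lemma cfQn_ge (hα : Irrational α) (n : ℕ) :
    cfA α (n + 1) * cfQn α (n + 1) ≤ cfQn α (n + 2) := by
  have := cfQn_nonneg hα n
  rw [cfQn]; omega

lemma cfQ_eq : ∀ n, cfQ α n = cfQn α (n + 1) := by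
  intro n
  induction n using Nat.twoStepInduction with
  | zero => rfl
  | one => rw [cfQ, cfQn, cfQn, cfQn]; ring
  | more n h1 h2 => rw [cfQ, cfQn, h1, h2]

lemma cfP_eq : ∀ n, cfP α n = cfPn α (n + 1) := by
  intro n
  induction n using Nat.twoStepInduction with
  | zero => show cfA α 0 = cfA α 0; rfl
  | one => show cfA α 0 * cfA α 1 + 1 = cfA α 1 * cfA α 0 + 1
           ring
  | more n h1 h2 => rw [cfP, cfPn, h1, h2]

lemma cfTheta_ne_zero (hα : Irrational α) : ∀ n, cfTheta α n ≠ 0 := by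
  intro n
  match n with
  | 0 => norm_num [cfTheta, cfQn, cfPn]
  | n + 1 =>
    intro h
    unfold cfTheta at h
    have hq : cfQn α (n + 1) ≠ 0 := by have := one_le_cfQn hα n; omega
    have : Irrational ((cfQn α (n + 1) : ℝ) * α) := hα.intCast_mul hq
    rw [mul_comm] at this
    exact (this.ne_int (cfPn α (n + 1))) (by linarith)

lemma cfTheta_rec (n : ℕ) :
    cfTheta α (n + 2) = cfA α (n + 1) * cfTheta α (n + 1) + cfTheta α n := by
  unfold cfTheta
  rw [cfQn, cfPn]
  push_cast
  ring

lemma cfTheta_key (hα : Irrational α) : ∀ n,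
    cfCQ α (n + 1) * cfTheta α (n + 1) = - cfTheta α n := by
  intro n
  induction n with
  | zero =>
    have h := fract_pos hα 0
    have hne : cfCQ α 0 - ((cfA α 0 : ℤ) : ℝ) ≠ 0 := ne_of_gt h
    have hx2 : cfCQ α 1 = (cfCQ α 0 - ((cfA α 0 : ℤ) : ℝ))⁻¹ := by
      rw [show cfCQ α 1 = 1 / (cfCQ α 0 - ⌊cfCQ α 0⌋) from rfl, one_div]
      rfl
    rw [hx2, inv_mul_eq_div, div_eq_iff hne]
    have hq0 : cfQn α 0 = 0 := rfl
    have hq1 : cfQn α 1 = 1 := rfl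
    have hp0 : cfPn α 0 = 1 := rfl
    have hp1 : cfPn α 1 = cfA α 0 := rfl
    have hc0 : cfCQ α 0 = α := rfl
    simp only [cfTheta, hq0, hq1, hp0, hp1, hc0]
    push_cast
    ring
  | succ n ih =>
    have h := fract_pos hα (n + 1)
    have hne : cfCQ α (n + 1) - ((cfA α (n + 1) : ℤ) : ℝ) ≠ 0 := ne_of_gt h
    have hx2 : cfCQ α (n + 2) = (cfCQ α (n + 1) - ((cfA α (n + 1) : ℤ) : ℝ))⁻¹ := by
      rw [cfCQ, one_div]
      rfl
    rw [cfTheta_rec, hx2, inv_mul_eq_div, div_eq_iff hne]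
    linear_combination ih

lemma cfTheta_abs (hα : Irrational α) : ∀ n,
    |cfTheta α (n + 1)| * (cfCQ α (n + 1) * cfQn α (n + 1) + cfQn α n) = 1 := by
  intro n
  induction n with
  | zero =>
    have h := fract_pos hα 0
    have habs : |cfTheta α 1| = cfTheta α 1 := by
      rw [abs_of_pos]
      show (0:ℝ) < α * cfQn α 1 - cfPn α 1
      unfold cfQn cfPn cfA cfCQ
      push_cast
      simpa [cfCQ] using h
    rw [habs]
    have hne : cfCQ α 0 - ((cfA α 0 : ℤ) : ℝ) ≠ 0 := ne_of_gt h
    have hx2 : cfCQ α 1 = (cfCQ α 0 - ((cfA α 0 : ℤ) : ℝ))⁻¹ := by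
      rw [show cfCQ α 1 = 1 / (cfCQ α 0 - ⌊cfCQ α 0⌋) from rfl, one_div]
      rfl
    have hq0 : cfQn α 0 = 0 := rfl
    have hq1 : cfQn α 1 = 1 := rfl
    have hp1 : cfPn α 1 = cfA α 0 := rfl
    rw [hx2]
    simp only [cfTheta, hq0, hq1, hp1]
    push_cast
    rw [mul_comm]
    rw [show ((cfCQ α 0 - ((cfA α 0:ℤ):ℝ))⁻¹ * 1 + 0) = (cfCQ α 0 - ((cfA α 0:ℤ):ℝ))⁻¹ by ring]
    rw [inv_mul_eq_div, div_eq_iff hne]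
    have hc0 : cfCQ α 0 = α := rfl
    rw [hc0]
    ring
  | succ n ih =>
    have hkey := cfTheta_key hα (n + 1)
    have hx : 1 < cfCQ α (n + 2) := one_lt_cfCQ hα (n + 1)
    have habs : |cfTheta α (n + 2)| * cfCQ α (n + 2) = |cfTheta α (n + 1)| := by
      rw [← abs_of_pos (lt_trans zero_lt_one hx), ← abs_mul, mul_comm, hkey, abs_neg]
    have hfr : cfCQ α (n + 2) = 1 / (cfCQ α (n + 1) - ⌊cfCQ α (n + 1)⌋) := rfl
    have hfp := fract_pos hα (n + 1)
    have hQ : (cfQn α (n + 2) : ℝ) = (⌊cfCQ α (n + 1)⌋ : ℝ) * cfQn α (n + 1) + cfQn α n := by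
      rw [cfQn]; push_cast; rfl
    have hcx : cfCQ α (n + 2) ≠ 0 := by linarith
    calc |cfTheta α (n + 2)| * (cfCQ α (n + 2) * cfQn α (n + 2) + cfQn α (n + 1))
        = (|cfTheta α (n + 2)| * cfCQ α (n + 2)) *
            ((cfQn α (n + 2) : ℝ) + (cfQn α (n + 1) : ℝ) / cfCQ α (n + 2)) := by
          field_simp
      _ = |cfTheta α (n + 1)| * (cfCQ α (n + 1) * cfQn α (n + 1) + cfQn α n) := by
          rw [habs]
          congr 1
          rw [hfr, one_div, div_eq_mul_inv, inv_inv, hQ]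
          push_cast
          ring
      _ = 1 := ih

lemma cfTheta_lt (hα : Irrational α) (n : ℕ) :
    |cfTheta α (n + 1)| * (cfQn α (n + 2) : ℝ) < 1 := by
  have h := cfTheta_abs hα n
  have hx : (cfA α (n + 1) : ℝ) < cfCQ α (n + 1) := cfA_lt_cfCQ hα (n + 1)
  have hq1 : (1:ℝ) ≤ (cfQn α (n + 1) : ℝ) := by exact_mod_cast one_le_cfQn hα n
  have habs : 0 < |cfTheta α (n + 1)| := abs_pos.2 (cfTheta_ne_zero hα (n + 1))
  have hQ : (cfQn α (n + 2) : ℝ) = (cfA α (n + 1) : ℝ) * cfQn α (n + 1) + cfQn α n := by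
    rw [cfQn]; push_cast; ring
  rw [hQ]
  have key : (0:ℝ) < |cfTheta α (n + 1)| * ((cfCQ α (n + 1) - (cfA α (n + 1) : ℝ)) * (cfQn α (n + 1) : ℝ)) :=
    mul_pos habs (mul_pos (sub_pos.2 hx) (by linarith))
  nlinarith [key, h]

lemma cfTheta_sign (hα : Irrational α) (n : ℕ) :
    cfTheta α (n + 1) * cfTheta α (n + 2) < 0 := by
  have hkey := cfTheta_key hα (n + 1)
  have hx : 0 < cfCQ α (n + 2) := lt_trans zero_lt_one (one_lt_cfCQ hα (n + 1))
  have hth : cfTheta α (n + 2) ≠ 0 := cfTheta_ne_zero hα (n + 2)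
  have : cfTheta α (n + 1) = - (cfCQ α (n + 2) * cfTheta α (n + 2)) := by linarith
  rw [this]
  have hp : 0 < cfCQ α (n + 2) * (cfTheta α (n + 2) * cfTheta α (n + 2)) :=
    mul_pos hx (mul_self_pos.2 hth)
  nlinarith [hp]

lemma cf_det (hα : Irrational α) : ∀ n,
    cfPn α (n + 1) * cfQn α n - cfPn α n * cfQn α (n + 1) = (-1) ^ (n + 1) := by
  intro n
  induction n with
  | zero => simp [cfPn, cfQn]
  | succ n ih =>
    rw [cfPn, cfQn, pow_succ]
    linear_combination (-1 : ℤ) * ih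

lemma cf_decomp (hα : Irrational α) (n : ℕ) (k m : ℤ) :
    ∃ x y : ℤ, x * cfQn α (n + 1) + y * cfQn α (n + 2) = k ∧
      x * cfPn α (n + 1) + y * cfPn α (n + 2) = m := by
  have hdet := cf_det hα (n + 1)
  rcases neg_one_pow_eq_or ℤ (n + 2) with he | he <;> rw [he] at hdet
  · exact ⟨k * cfPn α (n + 2) - m * cfQn α (n + 2),
      m * cfQn α (n + 1) - k * cfPn α (n + 1),
      by linear_combination k * hdet, by linear_combination m * hdet⟩
  · exact ⟨-(k * cfPn α (n + 2) - m * cfQn α (n + 2)),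
      -(m * cfQn α (n + 1) - k * cfPn α (n + 1)),
      by linear_combination -k * hdet, by linear_combination -m * hdet⟩

lemma cf_best (hα : Irrational α) (n : ℕ) (k m : ℤ) (hk : k ≠ 0)
    (hklt : |k| < cfQn α (n + 2)) :
    |cfTheta α (n + 1)| ≤ |α * k - m| := by
  obtain ⟨x, y, hxy1, hxy2⟩ := cf_decomp hα n k m
  have hcomb : α * k - m = x * cfTheta α (n + 1) + y * cfTheta α (n + 2) := by
    unfold cfTheta
    rw [← hxy1, ← hxy2]
    push_cast
    ring
  set a := cfTheta α (n + 1) with ha'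
  set b := cfTheta α (n + 2) with hb'
  have ha : a ≠ 0 := cfTheta_ne_zero hα (n + 1)
  have hb : b ≠ 0 := cfTheta_ne_zero hα (n + 2)
  have hab : a * b < 0 := cfTheta_sign hα n
  have hQ1 : (1:ℤ) ≤ cfQn α (n + 1) := one_le_cfQn hα n
  have hQ2 : (1:ℤ) ≤ cfQn α (n + 2) := one_le_cfQn hα (n + 1)
  rw [hcomb]
  rcases eq_or_ne y 0 with hy | hy
  · subst hy
    have hx : x ≠ 0 := by
      intro h; apply hk; rw [← hxy1, h]; ring
    have hx1 : (1:ℝ) ≤ |(x:ℝ)| := by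
      have : (1:ℤ) ≤ |x| := Int.one_le_abs hx
      calc (1:ℝ) = ((1:ℤ):ℝ) := by norm_num
        _ ≤ ((|x| : ℤ) : ℝ) := by exact_mod_cast this
        _ = |(x:ℝ)| := by push_cast; ring
    have heq : |(x:ℝ) * a + ((0:ℤ):ℝ) * b| = |(x:ℝ)| * |a| := by
      push_cast
      rw [zero_mul, add_zero, abs_mul]
    rw [heq]
    nlinarith [abs_nonneg a]
  · rcases eq_or_ne x 0 with hx | hx
    · exfalso
      subst hx
      have : k = y * cfQn α (n + 2) := by rw [← hxy1]; ring
      rw [this, abs_mul, abs_of_pos (by omega : (0:ℤ) < cfQn α (n + 2))] at hklt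
      have := Int.one_le_abs hy
      nlinarith
    · -- both nonzero
      have hxa : (x:ℝ) * a ≠ 0 := mul_ne_zero (Int.cast_ne_zero.2 hx) ha
      have hyb : (y:ℝ) * b ≠ 0 := mul_ne_zero (Int.cast_ne_zero.2 hy) hb
      rcases lt_or_gt_of_ne (mul_ne_zero hxa hyb) with hs | hs
      · -- opposite signs: x, y must have same sign, giving |k| ≥ Q(n+2), contradiction
        exfalso
        have hxyr : 0 < (x:ℝ) * (y:ℝ) := by
          rcases lt_trichotomy ((x:ℝ) * (y:ℝ)) 0 with h | h | h
          · exfalso; nlinarith [mul_pos_of_neg_of_neg h hab]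
          · exfalso
            rcases mul_eq_zero.1 h with h' | h'
            · exact (Int.cast_ne_zero.2 hx) h'
            · exact (Int.cast_ne_zero.2 hy) h'
          · exact h
        have hxy : 0 < x * y := by exact_mod_cast hxyr
        rcases hx.lt_or_gt with hxneg | hxpos
        · have hyneg : y < 0 := by nlinarith
          have : k ≤ -cfQn α (n + 2) := by
            rw [← hxy1]
            nlinarith
          rw [abs_lt] at hklt; omega
        · have hypos : 0 < y := by nlinarith
          have : cfQn α (n + 2) ≤ k := by
            rw [← hxy1]
            nlinarith
          rw [abs_lt] at hklt; omega
      · -- same sign: |sum| = |xa| + |yb| ≥ |a|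
        have h1 : |(x:ℝ) * a + (y:ℝ) * b| = |(x:ℝ) * a| + |(y:ℝ) * b| := by
          rcases le_or_gt 0 ((x:ℝ) * a) with hpos | hneg
          · have : 0 ≤ (y:ℝ) * b := by nlinarith
            rw [abs_of_nonneg hpos, abs_of_nonneg this,
              abs_of_nonneg (by linarith : 0 ≤ (x:ℝ) * a + (y:ℝ) * b)]
          · have : (y:ℝ) * b < 0 := by nlinarith
            rw [abs_of_neg hneg, abs_of_neg this,
              abs_of_neg (by linarith : (x:ℝ) * a + (y:ℝ) * b < 0)]
            ring
        have hx1 : (1:ℝ) ≤ |(x:ℝ)| := by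
          have : (1:ℤ) ≤ |x| := Int.one_le_abs hx
          calc (1:ℝ) = ((1:ℤ):ℝ) := by norm_num
            _ ≤ ((|x| : ℤ) : ℝ) := by exact_mod_cast this
            _ = |(x:ℝ)| := by push_cast; ring
        rw [h1]
        have : |a| ≤ |(x:ℝ) * a| := by
          rw [abs_mul]; nlinarith [abs_nonneg a]
        have := abs_nonneg ((y:ℝ) * b)
        push_cast
        linarith

open Real in
lemma cos_eq_one_sub (u : ℝ) : Real.cos u = 1 - 2 * Real.sin (u / 2) ^ 2 := by
  have h := Real.cos_two_mul (u / 2)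
  have h2 : Real.cos (u / 2) ^ 2 = 1 - Real.sin (u / 2) ^ 2 := Real.cos_sq' _
  rw [show 2 * (u / 2) = u by ring] at h
  rw [h, h2]; ring

lemma one_sub_cos_le (u : ℝ) : 1 - Real.cos u ≤ u ^ 2 / 2 := by
  rw [cos_eq_one_sub u]
  have := Real.sin_sq_le_sq (x := u / 2)
  nlinarith

lemma abs_sin_ge {r : ℝ} (h : |r| ≤ 1) : |r| ≤ |Real.sin (Real.pi * r / 2)| := by
  have hpi := Real.pi_pos
  rcases abs_cases r with ⟨he, hr⟩ | ⟨he, hr⟩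
  · rw [he] at h ⊢
    have h1 : Real.pi * r / 2 ≤ Real.pi / 2 := by nlinarith
    have h2 : 0 ≤ Real.pi * r / 2 := by positivity
    have := Real.mul_le_sin h2 h1
    have habs : Real.sin (Real.pi * r / 2) ≤ |Real.sin (Real.pi * r / 2)| := le_abs_self _
    calc r = 2 / Real.pi * (Real.pi * r / 2) := by field_simp
      _ ≤ Real.sin (Real.pi * r / 2) := this
      _ ≤ _ := habs
  · rw [he] at h ⊢
    have h1 : Real.pi * (-r) / 2 ≤ Real.pi / 2 := by nlinarith
    have h2 : 0 ≤ Real.pi * (-r) / 2 := by nlinarith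
    have := Real.mul_le_sin h2 h1
    have hodd : Real.sin (Real.pi * r / 2) = - Real.sin (Real.pi * (-r) / 2) := by
      rw [show Real.pi * r / 2 = -(Real.pi * (-r) / 2) by ring, Real.sin_neg]
    rw [hodd, abs_neg]
    have habs : Real.sin (Real.pi * (-r) / 2) ≤ |Real.sin (Real.pi * (-r) / 2)| := le_abs_self _
    calc -r = 2 / Real.pi * (Real.pi * (-r) / 2) := by field_simp
      _ ≤ Real.sin (Real.pi * (-r) / 2) := this
      _ ≤ _ := habs

/-- near an odd integer, `1 + cos (π x) ≥ 2 (x-k)²`. -/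
lemma one_add_cos_ge {x : ℝ} {k : ℤ} (hk : Odd k) (h : |x - (k:ℝ)| ≤ 1) :
    2 * (x - (k:ℝ)) ^ 2 ≤ 1 + Real.cos (Real.pi * x) := by
  obtain ⟨m, hm⟩ := hk
  set r := x - (k:ℝ) with hr
  have hx : Real.pi * x = (Real.pi * r + Real.pi) + (m:ℤ) * (2 * Real.pi) := by
    rw [hr, hm]; push_cast; ring
  rw [hx, Real.cos_add_int_mul_two_pi, Real.cos_add_pi]
  have h1 : |r| ≤ |Real.sin (Real.pi * r / 2)| := abs_sin_ge h
  have h2 : r ^ 2 ≤ Real.sin (Real.pi * r / 2) ^ 2 := by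
    rw [← sq_abs r, ← sq_abs (Real.sin _)]
    exact pow_le_pow_left₀ (abs_nonneg _) h1 2
  rw [cos_eq_one_sub (Real.pi * r)]
  nlinarith

lemma exists_nearest_odd (x : ℝ) : ∃ k : ℤ, Odd k ∧ |x - (k:ℝ)| ≤ 1 := by
  refine ⟨2 * round ((x - 1) / 2) + 1, ⟨round ((x - 1) / 2), by ring⟩, ?_⟩
  have h := abs_sub_round ((x - 1) / 2)
  push_cast
  rw [show x - (2 * (round ((x - 1) / 2) : ℝ) + 1) = 2 * ((x - 1) / 2 - round ((x - 1) / 2)) by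
    ring, abs_mul]
  rw [abs_of_pos (by norm_num : (0:ℝ) < 2)]
  linarith

noncomputable def Sfun (α t : ℝ) : ℂ :=
  2 + Complex.exp (Real.pi * (t : ℂ) * Complex.I)
    + Complex.exp (Real.pi * (α : ℂ) * (t : ℂ) * Complex.I)

lemma mTilde_eq (α η : ℝ) :
    mTilde α η = ⨆ t : Set.Icc (-η) η, ‖Sfun α (t : ℝ)‖⁻¹ := rfl

lemma exp_eq_neg_one_imp {x : ℝ} (h : Complex.exp (Real.pi * (x:ℂ) * Complex.I) = -1) :
    ∃ n : ℤ, x = 2 * n - 1 := by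
  have h1 : Complex.exp (Real.pi * (x:ℂ) * Complex.I + Real.pi * Complex.I) = 1 := by
    rw [Complex.exp_add, h, Complex.exp_pi_mul_I]; ring
  rw [Complex.exp_eq_one_iff] at h1
  obtain ⟨n, hn⟩ := h1
  have him := congrArg Complex.im hn
  simp [Complex.add_im, Complex.mul_im, Complex.I_im, Complex.I_re,
    Complex.ofReal_re, Complex.ofReal_im, Complex.mul_re] at him
  have hπ := Real.pi_ne_zero
  refine ⟨n, ?_⟩
  have : Real.pi * x + Real.pi = Real.pi * (2 * n) := by
    rw [him]; push_cast; ring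
  have h2 : Real.pi * (x + 1) = Real.pi * (2 * n) := by rw [← this]; ring
  have := mul_left_cancel₀ hπ h2
  linarith

lemma exp_pi_mul_I_abs (x : ℝ) : ‖Complex.exp ((x:ℂ) * Complex.I)‖ = 1 := by
  rw [Complex.norm_exp]
  simp

lemma Sfun_ne_zero {α : ℝ} (hα : Irrational α) (t : ℝ) : Sfun α t ≠ 0 := by
  intro h
  set a := Complex.exp (Real.pi * (t:ℂ) * Complex.I) with ha'
  set b := Complex.exp (Real.pi * (α:ℂ) * (t:ℂ) * Complex.I) with hb'
  have haa : ‖a‖ = 1 := by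
    rw [ha', show Real.pi * (t:ℂ) * Complex.I = ((Real.pi * t : ℝ) : ℂ) * Complex.I by
      push_cast; ring]
    exact exp_pi_mul_I_abs _
  have hbb : ‖b‖ = 1 := by
    rw [hb', show Real.pi * (α:ℂ) * (t:ℂ) * Complex.I = ((Real.pi * (α * t) : ℝ) : ℂ) * Complex.I by
      push_cast; ring]
    exact exp_pi_mul_I_abs _
  have hre : 2 + a.re + b.re = 0 := by
    have := congrArg Complex.re h
    simpa [Sfun] using this
  have hare : -1 ≤ a.re := by
    have := Complex.abs_re_le_norm a; rw [haa] at this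
    cases abs_le.1 this; linarith
  have hbre : -1 ≤ b.re := by
    have := Complex.abs_re_le_norm b; rw [hbb] at this
    cases abs_le.1 this; linarith
  have hae : a.re = -1 := by linarith
  have hbe : b.re = -1 := by linarith
  have haim : a.im = 0 := by
    have h1 : a.re ^ 2 + a.im ^ 2 = 1 := by
      have h2 := Complex.sq_norm a; rw [haa] at h2
      rw [Complex.normSq_apply] at h2
      nlinarith [h2]
    nlinarith
  have hbim : b.im = 0 := by
    have h1 : b.re ^ 2 + b.im ^ 2 = 1 := by
      have h2 := Complex.sq_norm b; rw [hbb] at h2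
      rw [Complex.normSq_apply] at h2
      nlinarith [h2]
    nlinarith
  have haneg : a = -1 := Complex.ext (by simp [hae]) (by simp [haim])
  have hbneg : b = -1 := Complex.ext (by simp [hbe]) (by simp [hbim])
  obtain ⟨n, hn⟩ := exp_eq_neg_one_imp (ha' ▸ haneg)
  have hb2 : Complex.exp (Real.pi * ((α * t : ℝ):ℂ) * Complex.I) = -1 := by
    rw [show Real.pi * ((α * t : ℝ):ℂ) * Complex.I = Real.pi * (α:ℂ) * (t:ℂ) * Complex.I by
      push_cast; ring]
    exact hb' ▸ hbneg
  obtain ⟨m, hm⟩ := exp_eq_neg_one_imp hb2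
  have htne : (2 * n - 1 : ℤ) ≠ 0 := by omega
  have : Irrational (((2 * n - 1 : ℤ) : ℝ) * α) := hα.intCast_mul htne
  apply this.ne_int (2 * m - 1)
  push_cast
  rw [mul_comm, ← hn]
  rw [hm]

lemma Sfun_re (α t : ℝ) :
    (Sfun α t).re = 2 + Real.cos (Real.pi * t) + Real.cos (Real.pi * (α * t)) := by
  unfold Sfun
  have e1 : (Complex.exp (Real.pi * (t:ℂ) * Complex.I)).re = Real.cos (Real.pi * t) := by
    rw [show Real.pi * (t:ℂ) * Complex.I = ((Real.pi * t : ℝ) : ℂ) * Complex.I by push_cast; ring]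
    exact Complex.exp_ofReal_mul_I_re _
  have e2 : (Complex.exp (Real.pi * (α:ℂ) * (t:ℂ) * Complex.I)).re
      = Real.cos (Real.pi * (α * t)) := by
    rw [show Real.pi * (α:ℂ) * (t:ℂ) * Complex.I = ((Real.pi * (α * t) : ℝ) : ℂ) * Complex.I by
      push_cast; ring]
    exact Complex.exp_ofReal_mul_I_re _
  simp [Complex.add_re, e1, e2]

lemma Sfun_re_le_abs (α t : ℝ) : (Sfun α t).re ≤ ‖Sfun α t‖ :=
  Complex.re_le_norm _

lemma Sfun_special {α t : ℝ} {N : ℤ} (hN : Even N) (h1 : (1 + α) * t = (N:ℝ)) :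
    Sfun α t = ((2 + 2 * Real.cos (Real.pi * t) : ℝ) : ℂ) := by
  obtain ⟨M, hM⟩ := hN
  have hb : Complex.exp (Real.pi * (α:ℂ) * (t:ℂ) * Complex.I)
      = Complex.exp (((-(Real.pi * t) : ℝ):ℂ) * Complex.I) := by
    have hsplit : Real.pi * (α:ℂ) * (t:ℂ) * Complex.I
        = ((M:ℂ)) * (2 * Real.pi * Complex.I) + ((-(Real.pi * t) : ℝ):ℂ) * Complex.I := by
      have h1' : ((1:ℂ) + (α:ℂ)) * (t:ℂ) = ((N:ℤ):ℂ) := by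
        exact_mod_cast congrArg (fun x : ℝ => (x : ℂ)) h1
      have hM' : ((N:ℤ):ℂ) = (M:ℂ) + (M:ℂ) := by exact_mod_cast congrArg (fun x : ℤ => (x:ℂ)) hM
      push_cast
      push_cast at h1' hM'
      rw [show (Real.pi:ℂ) * (α:ℂ) * (t:ℂ) = Real.pi * (((1:ℂ) + α) * t) - Real.pi * t by ring,
        h1', hM']
      ring
    rw [hsplit, Complex.exp_add, Complex.exp_int_mul_two_pi_mul_I, one_mul]
  unfold Sfun
  rw [hb]
  rw [show Real.pi * (t:ℂ) * Complex.I = ((Real.pi * t : ℝ) : ℂ) * Complex.I by push_cast; ring]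
  rw [Complex.exp_mul_I, Complex.exp_mul_I]
  push_cast
  rw [Complex.cos_neg, Complex.sin_neg]
  ring

lemma Sfun_abs_cont (hα : Irrational α) :
    Continuous fun t : ℝ => ‖Sfun α t‖⁻¹ := by
  have hc : Continuous fun t : ℝ => Sfun α t := by
    unfold Sfun
    fun_prop
  exact ((continuous_norm.comp hc).inv₀
    fun t => norm_ne_zero_iff.mpr (Sfun_ne_zero hα t))

lemma mTilde_bdd (hα : Irrational α) (η : ℝ) :
    BddAbove (Set.range fun t : Set.Icc (-η) η => ‖Sfun α (t:ℝ)‖⁻¹) := by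
  obtain ⟨C, hC⟩ := (isCompact_Icc.image (Sfun_abs_cont hα)).bddAbove
  refine ⟨C, ?_⟩
  rintro y ⟨t, rfl⟩
  exact hC (Set.mem_image_of_mem _ t.2)

lemma mTilde_ge (hα : Irrational α) {η t₀ : ℝ} (ht : t₀ ∈ Set.Icc (-η) η) :
    ‖Sfun α t₀‖⁻¹ ≤ mTilde α η := by
  rw [mTilde_eq]
  exact le_ciSup (mTilde_bdd hα η) (⟨t₀, ht⟩ : Set.Icc (-η) η)

lemma mTilde_le (hη : 0 ≤ η) {b : ℝ} (hb : 0 < b)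
    (hall : ∀ t : ℝ, t ∈ Set.Icc (-η) η → b ≤ ‖Sfun α t‖) :
    mTilde α η ≤ b⁻¹ := by
  rw [mTilde_eq]
  have hne : Nonempty (Set.Icc (-η) η) :=
    Set.Nonempty.to_subtype (Set.nonempty_Icc.2 (by linarith))
  refine ciSup_le fun t => ?_
  exact inv_anti₀ hb (hall t t.2)

lemma mTilde_mono (hα : Irrational α) {η η' : ℝ} (hη : 0 ≤ η) (h : η ≤ η') :
    mTilde α η ≤ mTilde α η' := by
  rw [mTilde_eq, mTilde_eq]
  have hne : Nonempty (Set.Icc (-η) η) :=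
    Set.Nonempty.to_subtype (Set.nonempty_Icc.2 (by linarith))
  refine ciSup_le fun t => ?_
  have ht : (t:ℝ) ∈ Set.Icc (-η') η' := by
    have := t.2
    simp only [Set.mem_Icc] at this ⊢
    constructor <;> linarith [this.1, this.2]
  exact le_ciSup (mTilde_bdd hα η') (⟨t, ht⟩ : Set.Icc (-η') η')

lemma lower_bound (hα : Irrational α) (n : ℕ) (hp : Odd (cfPn α (n+1)))
    (hq : Odd (cfQn α (n+1))) (hna : (1:ℝ) + α ≠ 0)
    (hr : |cfTheta α (n+1)| / |1 + α| ≤ 1) :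
    ∃ η₁ : ℝ, 0 ≤ η₁ ∧ η₁ ≤ (cfQn α (n+1) : ℝ) + 1 ∧
      (1+α)^2 / (Real.pi^2 * cfTheta α (n+1)^2) ≤ mTilde α η₁ := by
  set p := cfPn α (n+1) with hp'
  set q := cfQn α (n+1) with hq'
  set Θ := cfTheta α (n+1) with hΘ'
  have hπ := Real.pi_pos
  set t₀ : ℝ := ((p + q : ℤ) : ℝ) / (1 + α) with ht₀
  have h1 : (1 + α) * t₀ = ((p + q : ℤ) : ℝ) := by
    rw [ht₀]; field_simp
  have hNeven : Even (p + q) := hp.add_odd hq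
  have hS : Sfun α t₀ = ((2 + 2 * Real.cos (Real.pi * t₀) : ℝ) : ℂ) :=
    Sfun_special hNeven h1
  -- r = t₀ - q = -Θ/(1+α)
  set r : ℝ := t₀ - (q : ℝ) with hrr
  have hrval : r = -Θ / (1 + α) := by
    rw [hrr, ht₀, hΘ', cfTheta]
    field_simp
    push_cast
    ring
  have hrabs : |r| ≤ 1 := by
    rw [hrval, abs_div, abs_neg]
    exact hr
  -- cos (π t₀) = - cos (π r)
  obtain ⟨u, hu⟩ := hq
  have hcos : Real.cos (Real.pi * t₀) = - Real.cos (Real.pi * r) := by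
    have : Real.pi * t₀ = (Real.pi * r + Real.pi) + (u : ℤ) * (2 * Real.pi) := by
      rw [hrr]
      have : (q:ℝ) = 2*(u:ℝ) + 1 := by rw [hu]; push_cast; ring
      rw [this]; push_cast; ring
    rw [this, Real.cos_add_int_mul_two_pi, Real.cos_add_pi]
  clear_value r t₀ Θ q p
  have habs : ‖Sfun α t₀‖ ≤ Real.pi^2 * r^2 := by
    rw [hS, Complex.norm_real, Real.norm_eq_abs, hcos]
    have h2 := one_sub_cos_le (Real.pi * r)
    have h3 : (0:ℝ) ≤ 1 - Real.cos (Real.pi * r) := by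
      have := Real.cos_le_one (Real.pi * r); linarith
    rw [abs_of_nonneg (show (0:ℝ) ≤ 2 + 2 * -Real.cos (Real.pi * r) by linarith)]
    have hexp : (Real.pi * r)^2 = Real.pi^2 * r^2 := by ring
    linarith [h2, hexp]
  have hr2 : Real.pi^2 * r^2 = Real.pi^2 * Θ^2 / (1+α)^2 := by
    rw [hrval]; field_simp
  have habspos : 0 < ‖Sfun α t₀‖ :=
    norm_pos_iff.mpr (Sfun_ne_zero hα t₀)
  refine ⟨|t₀|, abs_nonneg _, ?_, ?_⟩
  · have : |t₀| ≤ |(q:ℝ)| + |r| := by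
      rw [hrr]
      have := abs_add_le ((q:ℝ)) (t₀ - q)
      simpa using this
    have hq1 : (1:ℝ) ≤ (q:ℝ) := by rw [hq']; exact_mod_cast one_le_cfQn hα n
    rw [abs_of_nonneg (by linarith : (0:ℝ) ≤ (q:ℝ))] at this
    linarith
  · have hmem : t₀ ∈ Set.Icc (-|t₀|) |t₀| := by
      constructor
      · exact neg_abs_le t₀
      · exact le_abs_self t₀
    have hge := mTilde_ge hα hmem
    have hΘne : Θ ≠ 0 := hΘ' ▸ cfTheta_ne_zero hα (n+1)
    have h5 : (Real.pi^2 * Θ^2 / (1+α)^2)⁻¹ ≤ ‖Sfun α t₀‖⁻¹ := by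
      apply inv_anti₀ habspos
      rw [← hr2]; exact habs
    have h6 : (Real.pi^2 * Θ^2 / (1+α)^2)⁻¹ = (1+α)^2 / (Real.pi^2 * Θ^2) := by
      rw [inv_div]
    rw [h6] at h5
    linarith

lemma upper_bound (hα : Irrational α) (n : ℕ) {H : ℝ} (hH : 0 ≤ H)
    (hHlt : H + 1 ≤ (cfQn α (n+2) : ℝ) - 1) :
    mTilde α H ≤ (cfTheta α (n+1)^2 / (2 * (1 + |α|)^2))⁻¹ := by
  set Θ := cfTheta α (n+1) with hΘ'
  set A := |α| with hA'
  have hΘne : Θ ≠ 0 := cfTheta_ne_zero hα (n+1)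
  have hΘpos : 0 < |Θ| := abs_pos.2 hΘne
  have hA0 : 0 ≤ A := abs_nonneg _
  have hb : (0:ℝ) < Θ^2 / (2 * (1 + A)^2) := by positivity
  apply mTilde_le hH hb
  intro t ht
  obtain ⟨k, hkodd, hk1⟩ := exists_nearest_odd t
  obtain ⟨l, hlodd, hl1⟩ := exists_nearest_odd (α * t)
  set ε := |Θ| / (2 * (1 + A)) with hε'
  have hεpos : 0 < ε := by positivity
  have hre := Sfun_re α t
  have hcos1 := one_add_cos_ge hkodd hk1
  have hcos2 := one_add_cos_ge hlodd hl1
  have hreabs := Sfun_re_le_abs α t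
  have hbound : ∀ d : ℝ, ε ≤ |d| →
      2 * d^2 ≥ Θ^2 / (2 * (1 + A)^2) := by
    intro d hd
    have : ε^2 ≤ d^2 := by
      rw [← sq_abs d]
      exact pow_le_pow_left₀ hεpos.le hd 2
    have : 2 * ε^2 ≤ 2 * d^2 := by linarith
    have hεsq : 2 * ε^2 = Θ^2 / (2 * (1 + A)^2) := by
      rw [hε']
      rw [div_pow, mul_pow]
      rw [sq_abs]
      field_simp
    linarith
  rcases le_or_gt ε |t - (k:ℝ)| with hcase | hcase
  · have h2 := hbound _ hcase
    have hc2 : (0:ℝ) ≤ 1 + Real.cos (Real.pi * (α * t)) := by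
      have := Real.neg_one_le_cos (Real.pi * (α * t)); linarith
    calc Θ^2 / (2 * (1 + A)^2) ≤ 2 * (t - (k:ℝ))^2 := h2
      _ ≤ (Sfun α t).re := by rw [hre]; nlinarith
      _ ≤ ‖Sfun α t‖ := hreabs
  · rcases le_or_gt ε |α * t - (l:ℝ)| with hcase2 | hcase2
    · have h2 := hbound _ hcase2
      have hc1 : (0:ℝ) ≤ 1 + Real.cos (Real.pi * t) := by
        have := Real.neg_one_le_cos (Real.pi * t); linarith
      calc Θ^2 / (2 * (1 + A)^2) ≤ 2 * (α * t - (l:ℝ))^2 := h2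
        _ ≤ (Sfun α t).re := by rw [hre]; nlinarith
        _ ≤ ‖Sfun α t‖ := hreabs
    · exfalso
      -- both distances small: contradiction with best approximation
      have hk0 : k ≠ 0 := by
        rintro rfl
        exact (by norm_num : ¬ Odd (0:ℤ)) hkodd
      have hklt : |k| < cfQn α (n + 2) := by
        have h1 : |(k:ℝ)| ≤ |t| + 1 := by
          have := abs_sub_abs_le_abs_sub (k:ℝ) t
          rw [abs_sub_comm] at this
          linarith [hk1, this]
        have h2 : |t| ≤ H := abs_le.2 ⟨ht.1, ht.2⟩
        have : |(k:ℝ)| < (cfQn α (n + 2) : ℝ) := by linarith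
        exact_mod_cast this
      have hbest := cf_best hα n k l hk0 hklt
      have htri : |α * (k:ℝ) - (l:ℝ)| ≤ A * |t - (k:ℝ)| + |α * t - (l:ℝ)| := by
        have : α * (k:ℝ) - (l:ℝ) = α * ((k:ℝ) - t) + (α * t - (l:ℝ)) := by ring
        rw [this]
        calc |α * ((k:ℝ) - t) + (α * t - (l:ℝ))|
            ≤ |α * ((k:ℝ) - t)| + |α * t - (l:ℝ)| := abs_add_le _ _
          _ = A * |(k:ℝ) - t| + |α * t - (l:ℝ)| := by rw [abs_mul, hA']
          _ = A * |t - (k:ℝ)| + |α * t - (l:ℝ)| := by rw [abs_sub_comm]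
      have hsmall : |α * (k:ℝ) - (l:ℝ)| < |Θ| := by
        have h3 : A * |t - (k:ℝ)| ≤ A * ε := mul_le_mul_of_nonneg_left hcase.le hA0
        have h4 : (A + 1) * ε = |Θ| / 2 := by
          rw [hε']; field_simp; ring
        have : A * |t - (k:ℝ)| + |α * t - (l:ℝ)| < A * ε + ε := by linarith
        have h5 : A * ε + ε = (A + 1) * ε := by ring
        rw [h5, h4] at this
        linarith
      rw [hΘ'] at hsmall
      have : |α * (k:ℝ) - (l:ℝ)| < |α * (k:ℝ) - (l:ℝ)| := lt_of_lt_of_le hsmall hbest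
      exact lt_irrefl _ this

/-- If the irrational `α` has large odd/odd gaps, then `m̃_α` does not have
positive increase. -/
theorem mTilde_not_positive_increase_of_large_oddOdd_gaps (α : ℝ) (hα : Irrational α)
    (hgaps : ∀ C : ℝ, 0 < C → ∃ n : ℕ, Odd (cfP α n) ∧ Odd (cfQ α n) ∧
      C ≤ (cfA α (n + 1) : ℝ)) :
    ¬ ∃ β : ℝ, 0 < β ∧ ∃ c : ℝ, 0 < c ∧ c ≤ 1 ∧ ∃ η₀ : ℝ, 0 < η₀ ∧
      ∀ lam η : ℝ, 1 ≤ lam → η₀ ≤ η → c * lam ^ β * mTilde α η ≤ mTilde α (lam * η) := by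
  rintro ⟨β, hβ, c, hc, hc1, η₀, hη₀, hPI⟩
  have hπ := Real.pi_pos
  set A := |α| with hA'
  have hA0 : (0:ℝ) ≤ A := abs_nonneg _
  have hna : (1:ℝ) + α ≠ 0 := by
    intro h
    exact hα.ne_int (-1) (by push_cast; linarith)
  set w := |1 + α| with hw'
  have hw0 : 0 < w := abs_pos.2 hna
  set K₀ : ℝ := 2 * Real.pi^2 * (1 + A)^2 / (c * w^2) with hK'
  have hK0 : 0 < K₀ := by positivity
  set lam : ℝ := max 1 ((K₀ + 1) ^ (β⁻¹)) with hlam'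
  have hlam1 : (1:ℝ) ≤ lam := le_max_left _ _
  have hlam0 : (0:ℝ) < lam := lt_of_lt_of_le zero_lt_one hlam1
  have hlamK : K₀ + 1 ≤ lam ^ β := by
    have h1 : (K₀ + 1) ^ (β⁻¹) ≤ lam := le_max_right _ _
    calc K₀ + 1 = ((K₀ + 1) ^ (β⁻¹)) ^ β :=
          (Real.rpow_inv_rpow (by positivity) (ne_of_gt hβ)).symm
      _ ≤ lam ^ β := Real.rpow_le_rpow (by positivity) h1 hβ.le
  set C : ℝ := max (lam * (2 + η₀) + 2) (1 / w + 1) with hC'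
  have hC0 : 0 < C := by
    have : (0:ℝ) < lam * (2 + η₀) + 2 := by nlinarith
    exact lt_of_lt_of_le this (le_max_left _ _)
  obtain ⟨n, hpodd, hqodd, hCa⟩ := hgaps C hC0
  clear_value C lam K₀ w A
  rw [cfP_eq] at hpodd
  rw [cfQ_eq] at hqodd
  set q : ℤ := cfQn α (n + 1) with hq'
  set Q2 : ℤ := cfQn α (n + 2) with hQ2'
  set Θ : ℝ := cfTheta α (n + 1) with hΘ'
  clear_value q Q2 Θ
  have hΘne : Θ ≠ 0 := by rw [hΘ']; exact cfTheta_ne_zero hα (n + 1)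
  have hΘ2 : (0:ℝ) < Θ^2 := by positivity
  have hq1 : (1:ℤ) ≤ q := by rw [hq']; exact one_le_cfQn hα n
  have hq1' : (1:ℝ) ≤ (q:ℝ) := by exact_mod_cast hq1
  have hQq : C * (q:ℝ) ≤ (Q2:ℝ) := by
    have h1 : cfA α (n + 1) * q ≤ Q2 := by rw [hq', hQ2']; exact cfQn_ge hα n
    have h1' : (cfA α (n + 1) : ℝ) * (q:ℝ) ≤ (Q2:ℝ) := by exact_mod_cast h1
    have h2 : C * (q:ℝ) ≤ (cfA α (n + 1) : ℝ) * (q:ℝ) :=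
      mul_le_mul_of_nonneg_right hCa (by linarith)
    linarith
  have hQ21 : (1:ℝ) ≤ (Q2:ℝ) := by
    rw [hQ2']; exact_mod_cast one_le_cfQn hα (n + 1)
  have hΘQ : |Θ| * (Q2:ℝ) < 1 := by rw [hΘ', hQ2']; exact cfTheta_lt hα n
  -- |Θ| / w ≤ 1
  have hCw : 1 / w + 1 ≤ C := by rw [hC']; exact le_max_right _ _
  have hCQ : C ≤ (Q2:ℝ) := by nlinarith
  have hr : |Θ| / w ≤ 1 := by
    rw [div_le_one hw0]
    have h1 : 1 / w < (Q2:ℝ) := by linarith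
    have h2 : |Θ| < 1 / (Q2:ℝ) := by
      rw [lt_div_iff₀ (by linarith : (0:ℝ) < (Q2:ℝ))]
      exact hΘQ
    have h3 : 1 / (Q2:ℝ) < w := by
      rw [div_lt_iff₀ (by linarith : (0:ℝ) < (Q2:ℝ))]
      calc (1:ℝ) = w * (1/w) := by field_simp
        _ < w * (Q2:ℝ) := by
            apply mul_lt_mul_of_pos_left h1 hw0
      
    linarith
  obtain ⟨η₁, hη₁0, hη₁le, hlow⟩ := lower_bound hα n hpodd (hq'.symm ▸ hqodd) hna
    (by rw [hw', hΘ'] at hr; exact hr)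
  rw [← hq'] at hη₁le
  rw [← hΘ'] at hlow
  set η : ℝ := max η₁ η₀ with hη'
  clear_value η
  have hηη₀ : η₀ ≤ η := by rw [hη']; exact le_max_right _ _
  have hη0 : 0 ≤ η := le_trans hη₀.le hηη₀
  have hmono : mTilde α η₁ ≤ mTilde α η :=
    mTilde_mono hα hη₁0 (by rw [hη']; exact le_max_left _ _)
  -- size of H = lam * η
  have hηle : η ≤ (q:ℝ) + 1 + η₀ := by
    rw [hη']
    apply max_le
    · linarith
    · linarith
  have hHlt : lam * η + 1 ≤ (Q2:ℝ) - 1 := by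
    have h1 : lam * η ≤ lam * ((q:ℝ) + 1 + η₀) :=
      mul_le_mul_of_nonneg_left hηle (by linarith)
    have h2 : (q:ℝ) + 1 + η₀ ≤ (q:ℝ) * (2 + η₀) := by nlinarith
    have h3 : lam * ((q:ℝ) + 1 + η₀) ≤ lam * ((q:ℝ) * (2 + η₀)) :=
      mul_le_mul_of_nonneg_left h2 (by linarith)
    have h4 : (lam * (2 + η₀) + 2) * (q:ℝ) ≤ C * (q:ℝ) :=
      mul_le_mul_of_nonneg_right (by rw [hC']; exact le_max_left _ _) (by linarith)
    have h5 : lam * ((q:ℝ) * (2 + η₀)) + 2 * (q:ℝ) = (lam * (2 + η₀) + 2) * (q:ℝ) := by ring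
    linarith [h1, h3, h4, hQq, h5, hq1']
  have hH0 : 0 ≤ lam * η := by positivity
  have hup := upper_bound hα n hH0 (by rw [hQ2'] at hHlt; exact hHlt)
  rw [← hΘ', ← hA'] at hup
  -- positive increase inequality
  have hPIa := hPI lam η hlam1 hηη₀
  have hlamβ0 : (0:ℝ) < lam ^ β := Real.rpow_pos_of_pos hlam0 β
  have hchain : c * lam ^ β * ((1+α)^2 / (Real.pi^2 * Θ^2)) ≤ (Θ^2 / (2 * (1 + A)^2))⁻¹ := by
    have h1 : c * lam ^ β * ((1+α)^2 / (Real.pi^2 * Θ^2)) ≤ c * lam ^ β * mTilde α η := by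
      apply mul_le_mul_of_nonneg_left _ (by positivity)
      exact le_trans hlow hmono
    linarith [hPIa, hup]
  -- derive lam ^ β ≤ K₀
  have hwsq : w^2 = (1+α)^2 := by rw [hw']; exact sq_abs _
  have hfinal : lam ^ β ≤ K₀ := by
    have hinv : (Θ^2 / (2 * (1 + A)^2))⁻¹ = 2 * (1 + A)^2 / Θ^2 := by
      rw [inv_div]
    rw [hinv] at hchain
    have h2 := mul_le_mul_of_nonneg_right hchain hΘ2.le
    have h3 : c * lam ^ β * ((1+α)^2 / (Real.pi^2 * Θ^2)) * Θ^2
        = c * lam ^ β * (1+α)^2 / Real.pi^2 := by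
      field_simp
    have h4 : 2 * (1 + A)^2 / Θ^2 * Θ^2 = 2 * (1 + A)^2 := by
      field_simp
    rw [h3, h4] at h2
    rw [hK']
    rw [le_div_iff₀ (by positivity : (0:ℝ) < c * w^2)]
    have h5 : c * lam ^ β * w^2 / Real.pi^2 ≤ 2 * (1 + A)^2 := by
      rw [hwsq]; exact h2
    have h6 := mul_le_mul_of_nonneg_right h5 (by positivity : (0:ℝ) ≤ Real.pi^2)
    have h7 : c * lam ^ β * w^2 / Real.pi^2 * Real.pi^2 = lam ^ β * (c * w^2) := by
      field_simp
    rw [h7] at h6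
    linarith
  linarith
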